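/- Let M, K, T be positive integers with T ≤ K ≤ M. Then there exists a family P of K-subsets of [M] such that any two distinct members of P intersect in fewer than T elements, and |P| ≥ C(M,K) / (∑_{i=T}^{K} C(K,i)·C(M−K,K−i)). -/

import Mathlib

open Finset

lemma gilbert_ball_card_le (M K T : ℕ) (A : Finset ℕ) (hA : A ⊆ Finset.range M)
    (hAc : A.card = K) :
    ((Finset.powersetCard K (Finset.range M)).filter (fun B => T ≤ (A ∩ B).card)).card ≤
      ∑ i ∈ Finset.Icc T K, K.choose i * (M - K).choose (K - i) := by
  classical
  have hsub : ((Finset.powersetCard K (Finset.range M)).filter (fun B => T ≤ (A ∩ B).card)) ⊆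
      (Finset.Icc T K).biUnion (fun i =>
        (Finset.powersetCard K (Finset.range M)).filter (fun B => (A ∩ B).card = i)) := by
    intro B hB
    simp only [mem_filter, mem_powersetCard] at hB
    obtain ⟨⟨hBsub, hBcard⟩, hT⟩ := hB
    refine Finset.mem_biUnion.2 ⟨(A ∩ B).card, ?_, ?_⟩
    · refine Finset.mem_Icc.2 ⟨hT, ?_⟩
      calc (A ∩ B).card ≤ B.card := Finset.card_le_card (Finset.inter_subset_right)
        _ = K := hBcard
    · simp [hBsub, hBcard]
  refine le_trans (Finset.card_le_card hsub) ?_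
  refine le_trans (Finset.card_biUnion_le) (Finset.sum_le_sum ?_)
  intro i hi
  rw [Finset.mem_Icc] at hi
  -- injective map B ↦ (A ∩ B, B \ A)
  have := Finset.card_le_card_of_injOn
    (f := fun B => (A ∩ B, B \ A))
    (s := (Finset.powersetCard K (Finset.range M)).filter (fun B => (A ∩ B).card = i))
    (t := (Finset.powersetCard i A) ×ˢ (Finset.powersetCard (K - i) (Finset.range M \ A)))
    (by
      intro B hB
      simp only [Finset.mem_coe, mem_filter, mem_powersetCard] at hB
      obtain ⟨⟨hBsub, hBcard⟩, hint⟩ := hB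
      refine Finset.mem_product.2 ⟨?_, ?_⟩
      · exact Finset.mem_powersetCard.2 ⟨Finset.inter_subset_left, hint⟩
      · refine Finset.mem_powersetCard.2 ⟨?_, ?_⟩
        · intro x hx
          rw [Finset.mem_sdiff] at hx ⊢
          exact ⟨hBsub hx.1, hx.2⟩
        · have h1 := Finset.card_sdiff_add_card_inter B A
          rw [Finset.inter_comm] at h1
          simp only [hint, hBcard] at h1
          show (B \ A).card = K - i
          omega)
    (by
      intro B1 h1 B2 h2 heq
      simp only [Prod.mk.injEq] at heq
      have key : ∀ B : Finset ℕ, (A ∩ B) ∪ (B \ A) = B := by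
        intro B; ext x; simp only [Finset.mem_union, Finset.mem_inter, Finset.mem_sdiff]; tauto
      rw [← key B1, heq.1, heq.2, key B2])
  refine le_trans this ?_
  rw [Finset.card_product, Finset.card_powersetCard, Finset.card_powersetCard, hAc,
    Finset.card_sdiff_of_subset hA, Finset.card_range, hAc]

theorem gilbert_bound (M K T : ℕ) (hT : 0 < T) (hTK : T ≤ K) (hKM : K ≤ M) :
    ∃ P : Finset (Finset ℕ),
      (∀ A ∈ P, A ⊆ Finset.range M ∧ A.card = K) ∧
      (∀ A ∈ P, ∀ B ∈ P, A ≠ B → (A ∩ B).card < T) ∧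
      (M.choose K : ℝ) /
          (∑ i ∈ Finset.Icc T K, (K.choose i : ℝ) * ((M - K).choose (K - i) : ℝ))
        ≤ (P.card : ℝ) := by
  classical
  set U := Finset.powersetCard K (Finset.range M) with hU
  set 𝒢 := (U.powerset).filter
    (fun P => ∀ A ∈ P, ∀ B ∈ P, A ≠ B → (A ∩ B).card < T) with h𝒢
  have hemp : (∅ : Finset (Finset ℕ)) ∈ 𝒢 := by simp [h𝒢]
  obtain ⟨P, hPmem, hPmax⟩ := Finset.exists_max_image 𝒢 Finset.card ⟨∅, hemp⟩
  rw [h𝒢, Finset.mem_filter, Finset.mem_powerset] at hPmem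
  obtain ⟨hPU, hPgood⟩ := hPmem
  refine ⟨P, ?_, hPgood, ?_⟩
  · intro A hA
    have := hPU hA
    rw [Finset.mem_powersetCard] at this
    exact this
  -- maximality gives covering
  have hcover : ∀ B ∈ U, ∃ A ∈ P, T ≤ (A ∩ B).card := by
    intro B hB
    by_contra hcon
    push_neg at hcon
    have hBnot : B ∉ P := by
      intro hBP
      have := hcon B hBP
      rw [Finset.inter_self] at this
      rw [Finset.mem_powersetCard] at hB
      omega
    have hins : insert B P ∈ 𝒢 := by
      rw [h𝒢, Finset.mem_filter, Finset.mem_powerset]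
      constructor
      · exact Finset.insert_subset hB hPU
      · intro A hA A' hA' hne
        rcases Finset.mem_insert.1 hA with h1 | h1
        · rcases Finset.mem_insert.1 hA' with h2 | h2
          · exact absurd (h1.trans h2.symm) hne
          · subst h1
            have := hcon A' h2
            rw [Finset.inter_comm] at this
            omega
        · rcases Finset.mem_insert.1 hA' with h2 | h2
          · subst h2
            have := hcon A h1
            omega
          · exact hPgood A h1 A' h2 hne
    have := hPmax _ hins
    rw [Finset.card_insert_of_notMem hBnot] at this
    omega
  -- counting
  set S : ℕ := ∑ i ∈ Finset.Icc T K, K.choose i * (M - K).choose (K - i) with hS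
  have hcount : M.choose K ≤ P.card * S := by
    have hUsub : U ⊆ P.biUnion (fun A => U.filter (fun B => T ≤ (A ∩ B).card)) := by
      intro B hB
      obtain ⟨A, hA, hTA⟩ := hcover B hB
      exact Finset.mem_biUnion.2 ⟨A, hA, Finset.mem_filter.2 ⟨hB, hTA⟩⟩
    have h1 : U.card ≤ ∑ A ∈ P, (U.filter (fun B => T ≤ (A ∩ B).card)).card :=
      le_trans (Finset.card_le_card hUsub) Finset.card_biUnion_le
    have h2 : ∀ A ∈ P, (U.filter (fun B => T ≤ (A ∩ B).card)).card ≤ S := by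
      intro A hA
      have hAU := hPU hA
      rw [Finset.mem_powersetCard] at hAU
      exact gilbert_ball_card_le M K T A hAU.1 hAU.2
    calc M.choose K = U.card := by rw [hU, Finset.card_powersetCard, Finset.card_range]
      _ ≤ ∑ A ∈ P, (U.filter (fun B => T ≤ (A ∩ B).card)).card := h1
      _ ≤ ∑ _A ∈ P, S := Finset.sum_le_sum h2
      _ = P.card * S := by rw [Finset.sum_const, smul_eq_mul]
  have hSpos : 0 < S := by
    have hKmem : K ∈ Finset.Icc T K := Finset.mem_Icc.2 ⟨hTK, le_refl K⟩
    have := Finset.single_le_sum (f := fun i => K.choose i * (M - K).choose (K - i))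
      (fun i _ => Nat.zero_le _) hKmem
    simp at this
    omega
  have hScast : (∑ i ∈ Finset.Icc T K, (K.choose i : ℝ) * ((M - K).choose (K - i) : ℝ)) = (S : ℝ) := by
    rw [hS]; push_cast; ring
  rw [hScast, div_le_iff₀ (by exact_mod_cast hSpos)]
  exact_mod_cast hcount
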